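/- Let μ > 0, M ≥ 0 and c₀ ≥ 0. Let f : ℝ^d → ℝ be differentiable and μ-strongly convex, i.e. f(y) ≥ f(x) + ∇f(x)·(y − x) + (μ/2)·‖y − x‖² for all x, y ∈ ℝ^d, with a minimizer θ* satisfying ‖θ*‖ ≤ M. On a probability space, let (F_k)_{k≥0} be a filtration, (α_k)_{k≥0} positive reals, (ε_k)_{k≥0} nonnegative reals, and let (θ_k)_{k≥0} and (g_k)_{k≥0} be sequences of square-integrable ℝ^d-valued random vectors such that: θ_k is F_k-measurable; ‖θ₀‖ ≤ M almost surely; θ_{k+1} = Π_M(θ_k − α_k·g_k) almost surely; and almost surely for every k, ‖E[g_k | F_k] − ∇f(θ_k)‖ ≤ (1 + ‖θ_k‖)·ε_k and E[‖g_k‖² | F_k] ≤ c₀·(1 + ‖θ_k‖²). Then for every k ≥ 0: E[‖θ_k − θ*‖²] ≤ 4M²·exp(−(μ/2)·Σ_{i=0}^{k−1} α_i) + (1 + M²)·Σ_{i=0}^{k−1} α_i·(c₀·α_i + 4·μ⁻¹·ε_i²)·exp(−(μ/2)·Σ_{j=i+1}^{k−1} α_j). -/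

import Mathlib

open MeasureTheory ProbabilityTheory
open scoped RealInnerProductSpace

noncomputable section

/-- Metric projection onto the closed Euclidean ball of radius `M` centered at `0`. -/
def projBall {d : ℕ} (M : ℝ) (x : EuclideanSpace ℝ (Fin d)) : EuclideanSpace ℝ (Fin d) :=
  if ‖x‖ ≤ M then x else (M / ‖x‖) • x

lemma norm_projBall_le {d : ℕ} {M : ℝ} (hM : 0 ≤ M) (x : EuclideanSpace ℝ (Fin d)) :
    ‖projBall M x‖ ≤ M := by
  unfold projBall
  split_ifs with h
  · exact h
  · push_neg at h
    have hx : 0 < ‖x‖ := lt_of_le_of_lt hM h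
    rw [norm_smul, Real.norm_eq_abs, abs_of_nonneg (div_nonneg hM hx.le), div_mul_cancel₀]
    exact hx.ne'

lemma projBall_nonexpansive {d : ℕ} {M : ℝ} {y : EuclideanSpace ℝ (Fin d)} (hy : ‖y‖ ≤ M)
    (x : EuclideanSpace ℝ (Fin d)) : ‖projBall M x - y‖ ≤ ‖x - y‖ := by
  unfold projBall
  split_ifs with h
  · exact le_refl _
  · push_neg at h
    have hM : 0 ≤ M := le_trans (norm_nonneg _) hy
    have hx : 0 < ‖x‖ := lt_of_le_of_lt hM h
    set t : ℝ := M / ‖x‖ with ht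
    have htx : t * ‖x‖ = M := div_mul_cancel₀ _ hx.ne'
    have ht0 : 0 ≤ t := div_nonneg hM hx.le
    have hsq : ‖t • x - y‖ ^ 2 ≤ ‖x - y‖ ^ 2 := by
      have e1 : ‖t • x - y‖ ^ 2 = t ^ 2 * ‖x‖ ^ 2 - 2 * (t * ⟪x, y⟫) + ‖y‖ ^ 2 := by
        rw [norm_sub_sq_real, real_inner_smul_left, norm_smul, Real.norm_eq_abs,
          abs_of_nonneg ht0, mul_pow]
      have e2 : ‖x - y‖ ^ 2 = ‖x‖ ^ 2 - 2 * ⟪x, y⟫ + ‖y‖ ^ 2 := norm_sub_sq_real x y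
      have hcs : ⟪x, y⟫ ≤ ‖x‖ * ‖y‖ := real_inner_le_norm x y
      have ht1 : t ≤ 1 := by
        rw [ht, div_le_one hx]; exact h.le
      nlinarith [norm_nonneg x, norm_nonneg y, sq_nonneg (‖x‖ - M)]
    exact (pow_le_pow_iff_left₀ (norm_nonneg _) (norm_nonneg _) two_ne_zero).mp hsq

lemma condexp_clm {Ω : Type*} {m m0 : MeasurableSpace Ω} (hm : m ≤ m0)
    (P : Measure Ω) [IsFiniteMeasure P]
    {E F : Type*} [NormedAddCommGroup E] [NormedSpace ℝ E] [CompleteSpace E]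
    [NormedAddCommGroup F] [NormedSpace ℝ F] [CompleteSpace F]
    (L : E →L[ℝ] F) {g : Ω → E} (hg : Integrable g P) :
    (fun ω => L ((P[g|m]) ω)) =ᵐ[P] P[fun ω => L (g ω)|m] := by
  refine ae_eq_condExp_of_forall_setIntegral_eq hm (L.integrable_comp hg)
    (fun s _ _ => (L.integrable_comp integrable_condExp).integrableOn)
    (fun s hs hμs => ?_) ?_
  · rw [L.integral_comp_comm integrable_condExp.integrableOn,
      setIntegral_condExp hm hg hs, L.integral_comp_comm hg.integrableOn]
  · exact StronglyMeasurable.aestronglyMeasurable (L.continuous.comp_stronglyMeasurable stronglyMeasurable_condExp)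

lemma coord_abs_le_norm {d : ℕ} (x : EuclideanSpace ℝ (Fin d)) (i : Fin d) :
    |x i| ≤ ‖x‖ := by
  rw [EuclideanSpace.norm_eq, ← Real.sqrt_sq_eq_abs]
  refine Real.sqrt_le_sqrt ?_
  refine Finset.single_le_sum (f := fun j => ‖x j‖ ^ 2) (fun j _ => sq_nonneg _)
    (Finset.mem_univ i) |>.trans_eq' ?_
  simp [sq_abs]

lemma integral_inner_condexp {Ω : Type*} {m m0 : MeasurableSpace Ω} (hm : m ≤ m0)
    {P : Measure Ω} [IsProbabilityMeasure P] {d : ℕ}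
    {g h : Ω → EuclideanSpace ℝ (Fin d)} (hg : Integrable g P)
    (hh : StronglyMeasurable[m] h) {C : ℝ} (hhC : ∀ᵐ ω ∂P, ‖h ω‖ ≤ C) :
    ∫ ω, ⟪h ω, g ω⟫ ∂P = ∫ ω, ⟪h ω, (P[g|m]) ω⟫ ∂P := by
  haveI : SigmaFinite (P.trim hm) := by infer_instance
  have hhi : ∀ i : Fin d, StronglyMeasurable[m] (fun ω => h ω i) := fun i =>
    (EuclideanSpace.proj (𝕜 := ℝ) i).continuous.comp_stronglyMeasurable hh
  have hhiC : ∀ i : Fin d, ∀ᵐ ω ∂P, ‖h ω i‖ ≤ C := fun i => by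
    filter_upwards [hhC] with ω hω
    exact (coord_abs_le_norm (h ω) i).trans hω
  have hgi : ∀ i : Fin d, Integrable (fun ω => g ω i) P := fun i =>
    (EuclideanSpace.proj (𝕜 := ℝ) i).integrable_comp hg
  have hkey : ∀ i : Fin d,
      ∫ ω, h ω i * g ω i ∂P = ∫ ω, h ω i * (P[g|m]) ω i ∂P := by
    intro i
    have hint : Integrable (fun ω => h ω i * g ω i) P :=
      (hgi i).bdd_mul ((hhi i).mono hm).aestronglyMeasurable (hhiC i)
    calc ∫ ω, h ω i * g ω i ∂P
        = ∫ ω, (P[fun ω => h ω i * g ω i|m]) ω ∂P := (integral_condExp hm).symm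
      _ = ∫ ω, h ω i * (P[fun ω => g ω i|m]) ω ∂P := by
          refine integral_congr_ae ?_
          filter_upwards [condExp_stronglyMeasurable_mul_of_bound hm (hhi i) (hgi i) C
            (hhiC i)] with ω hω
          exact hω
      _ = ∫ ω, h ω i * (P[g|m]) ω i ∂P := by
          refine integral_congr_ae ?_
          filter_upwards [condexp_clm hm P (EuclideanSpace.proj (𝕜 := ℝ) i) hg] with ω hω
          simp only [EuclideanSpace.proj, PiLp.proj_apply] at hω
          rw [← hω]
  have hintl : ∀ i : Fin d, Integrable (fun ω => h ω i * g ω i) P := fun i =>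
    (hgi i).bdd_mul ((hhi i).mono hm).aestronglyMeasurable (hhiC i)
  have hintr : ∀ i : Fin d, Integrable (fun ω => h ω i * (P[g|m]) ω i) P := fun i =>
    ((EuclideanSpace.proj (𝕜 := ℝ) i).integrable_comp integrable_condExp).bdd_mul
      ((hhi i).mono hm).aestronglyMeasurable (hhiC i)
  simp only [PiLp.inner_apply, RCLike.inner_apply, starRingEnd_apply, star_trivial]
  simp_rw [mul_comm _ (h _ _)]
  rw [integral_finset_sum _ (fun i _ => hintl i), integral_finset_sum _ (fun i _ => hintr i)]
  exact Finset.sum_congr rfl fun i _ => hkey i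

set_option maxHeartbeats 1600000 in
/-- Projected stochastic gradient descent with biased gradient estimates of a
`μ`-strongly convex function `f`:
`E[‖θ_k − θ*‖²] ≤ 4M² e^{−(μ/2) Σ_{i<k} α_i}
 + (1+M²) Σ_{i<k} α_i (c₀ α_i + 4 μ⁻¹ ε_i²) e^{−(μ/2) Σ_{i<j<k} α_j}`. -/
theorem projected_sgd_strongly_convex
    {Ω : Type*} [m0 : MeasurableSpace Ω] (P : Measure Ω) [IsProbabilityMeasure P]
    (d : ℕ) (μ M c₀ : ℝ) (hμ : 0 < μ) (hM : 0 ≤ M) (hc₀ : 0 ≤ c₀)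
    (f : EuclideanSpace ℝ (Fin d) → ℝ) (hf : Differentiable ℝ f)
    (hconv : ∀ x y : EuclideanSpace ℝ (Fin d),
      f x + ⟪gradient f x, y - x⟫ + μ / 2 * ‖y - x‖ ^ 2 ≤ f y)
    (θstar : EuclideanSpace ℝ (Fin d))
    (hmin : ∀ y, f θstar ≤ f y) (hθstarM : ‖θstar‖ ≤ M)
    (F : ℕ → MeasurableSpace Ω) (hF : ∀ k, F k ≤ m0) (hFmono : Monotone F)
    (α : ℕ → ℝ) (hα : ∀ k, 0 < α k)
    (ε : ℕ → ℝ) (hε : ∀ k, 0 ≤ ε k)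
    (θ g : ℕ → Ω → EuclideanSpace ℝ (Fin d))
    (hθmeas : ∀ k, StronglyMeasurable[F k] (θ k))
    (hθL2 : ∀ k, MemLp (θ k) 2 P) (hgL2 : ∀ k, MemLp (g k) 2 P)
    (hθ0 : ∀ᵐ ω ∂P, ‖θ 0 ω‖ ≤ M)
    (hrec : ∀ k, ∀ᵐ ω ∂P, θ (k + 1) ω = projBall M (θ k ω - α k • g k ω))
    (hbias : ∀ k, ∀ᵐ ω ∂P,
      ‖(P[g k | F k]) ω - gradient f (θ k ω)‖ ≤ (1 + ‖θ k ω‖) * ε k)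
    (hmom : ∀ k, ∀ᵐ ω ∂P,
      (P[fun ω' => ‖g k ω'‖ ^ 2 | F k]) ω ≤ c₀ * (1 + ‖θ k ω‖ ^ 2)) :
    ∀ k : ℕ,
      (∫ ω, ‖θ k ω - θstar‖ ^ 2 ∂P) ≤
        4 * M ^ 2 * Real.exp (-(μ / 2) * ∑ i ∈ Finset.range k, α i) +
        (1 + M ^ 2) * ∑ i ∈ Finset.range k,
          α i * (c₀ * α i + 4 * μ⁻¹ * ε i ^ 2) *
            Real.exp (-(μ / 2) * ∑ j ∈ Finset.Ico (i + 1) k, α j) := by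
  have hgInt : ∀ k, Integrable (g k) P := fun k => (hgL2 k).integrable one_le_two
  have hbound : ∀ k, ∀ᵐ ω ∂P, ‖θ k ω‖ ≤ M := by
    intro k
    induction k with
    | zero => exact hθ0
    | succ k _ =>
      filter_upwards [hrec k] with ω hω
      rw [hω]; exact norm_projBall_le hM _
  have h2M : ∀ k, ∀ᵐ ω ∂P, ‖θ k ω - θstar‖ ≤ 2 * M := by
    intro k
    filter_upwards [hbound k] with ω hω
    calc ‖θ k ω - θstar‖ ≤ ‖θ k ω‖ + ‖θstar‖ := norm_sub_le _ _
      _ ≤ 2 * M := by linarith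
  have hθAE : ∀ k, AEStronglyMeasurable (fun ω => θ k ω - θstar) P := fun k =>
    (((hθmeas k).mono (hF k)).sub stronglyMeasurable_const).aestronglyMeasurable
  have hI1 : ∀ k, Integrable (fun ω => ‖θ k ω - θstar‖ ^ 2) P := by
    intro k
    refine Integrable.mono' (integrable_const ((2*M)^2)) ?_ ?_
    · have hn := (hθAE k).norm
      simpa [pow_two, Pi.mul_def] using hn.mul hn
    · filter_upwards [h2M k] with ω hω
      rw [Real.norm_eq_abs, abs_of_nonneg (sq_nonneg _)]
      exact pow_le_pow_left₀ (norm_nonneg _) hω 2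
  have hDnonneg : ∀ k, 0 ≤ ∫ ω, ‖θ k ω - θstar‖ ^ 2 ∂P := fun k =>
    integral_nonneg fun ω => sq_nonneg _
  -- one-step recursion
  have hstep : ∀ k, (∫ ω, ‖θ (k+1) ω - θstar‖ ^ 2 ∂P) ≤
      Real.exp (-(μ/2) * α k) * (∫ ω, ‖θ k ω - θstar‖ ^ 2 ∂P)
        + α k * (1 + M^2) * (c₀ * α k + 4 * μ⁻¹ * ε k ^ 2) := by
    intro k
    have hm := hF k
    haveI : SigmaFinite (P.trim hm) := by infer_instance
    have hI2 : Integrable (fun ω => ⟪θ k ω - θstar, g k ω⟫) P := by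
      refine Integrable.mono' ((hgInt k).norm.const_mul (2*M))
        ((hθAE k).inner (hgInt k).aestronglyMeasurable) ?_
      filter_upwards [h2M k] with ω hω
      rw [Real.norm_eq_abs]
      calc |⟪θ k ω - θstar, g k ω⟫| ≤ ‖θ k ω - θstar‖ * ‖g k ω‖ := abs_real_inner_le_norm _ _
        _ ≤ 2*M * ‖g k ω‖ := mul_le_mul_of_nonneg_right hω (norm_nonneg _)
    have hI3 : Integrable (fun ω => ‖g k ω‖ ^ 2) P := by
      have h30 := (hgL2 k).integrable_norm_rpow two_ne_zero ENNReal.ofNat_ne_top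
      simpa [ENNReal.toReal_ofNat, Real.rpow_natCast] using h30
    have hptw : ∀ᵐ ω ∂P, ‖θ (k+1) ω - θstar‖ ^ 2 ≤
        ‖θ k ω - θstar‖ ^ 2 - 2 * α k * ⟪θ k ω - θstar, g k ω⟫ + α k ^ 2 * ‖g k ω‖ ^ 2 := by
      filter_upwards [hrec k] with ω hω
      have h1 : ‖θ (k+1) ω - θstar‖ ≤ ‖θ k ω - α k • g k ω - θstar‖ := by
        rw [hω]; exact projBall_nonexpansive hθstarM _
      have h2 : ‖θ k ω - α k • g k ω - θstar‖ ^ 2 =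
          ‖θ k ω - θstar‖ ^ 2 - 2 * α k * ⟪θ k ω - θstar, g k ω⟫ + α k ^ 2 * ‖g k ω‖ ^ 2 := by
        rw [sub_right_comm, norm_sub_sq_real, real_inner_smul_right, norm_smul,
          Real.norm_eq_abs, mul_pow, sq_abs]
        ring
      calc ‖θ (k+1) ω - θstar‖ ^ 2 ≤ ‖θ k ω - α k • g k ω - θstar‖ ^ 2 :=
            pow_le_pow_left₀ (norm_nonneg _) h1 2
        _ = _ := h2
    have hI2' : Integrable (fun ω => 2 * α k * ⟪θ k ω - θstar, g k ω⟫) P := hI2.const_mul _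
    have hI3' : Integrable (fun ω => α k ^ 2 * ‖g k ω‖ ^ 2) P := hI3.const_mul _
    have hIsub : Integrable (fun ω => ‖θ k ω - θstar‖ ^ 2
        - 2 * α k * ⟪θ k ω - θstar, g k ω⟫) P := (hI1 k).sub hI2'
    have hIrhs : Integrable (fun ω => ‖θ k ω - θstar‖ ^ 2 - 2 * α k * ⟪θ k ω - θstar, g k ω⟫
        + α k ^ 2 * ‖g k ω‖ ^ 2) P := hIsub.add hI3'
    have hmain : (∫ ω, ‖θ (k+1) ω - θstar‖ ^ 2 ∂P) ≤
        (∫ ω, ‖θ k ω - θstar‖ ^ 2 ∂P) - 2 * α k * (∫ ω, ⟪θ k ω - θstar, g k ω⟫ ∂P)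
          + α k ^ 2 * (∫ ω, ‖g k ω‖ ^ 2 ∂P) := by
      refine (integral_mono_ae (hI1 (k+1)) hIrhs hptw).trans_eq ?_
      rw [integral_add hIsub hI3', integral_sub (hI1 k) hI2', integral_const_mul,
        integral_const_mul]
    have hg2 : (∫ ω, ‖g k ω‖ ^ 2 ∂P) ≤ c₀ * (1 + M ^ 2) := by
      calc (∫ ω, ‖g k ω‖ ^ 2 ∂P) = ∫ ω, (P[fun ω' => ‖g k ω'‖ ^ 2|F k]) ω ∂P :=
            (integral_condExp hm).symm
        _ ≤ ∫ _ω, c₀ * (1 + M ^ 2) ∂P := by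
            refine integral_mono_ae integrable_condExp (integrable_const _) ?_
            filter_upwards [hmom k, hbound k] with ω h1 h2
            have h3 : ‖θ k ω‖ ^ 2 ≤ M ^ 2 := pow_le_pow_left₀ (norm_nonneg _) h2 2
            nlinarith
        _ = c₀ * (1 + M ^ 2) := by simp
    have hinner : μ/4 * (∫ ω, ‖θ k ω - θstar‖ ^ 2 ∂P) - 2*μ⁻¹*ε k^2*(1+M^2)
        ≤ ∫ ω, ⟪θ k ω - θstar, g k ω⟫ ∂P := by
      have hθsm : StronglyMeasurable[F k] (fun ω => θ k ω - θstar) :=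
        (hθmeas k).sub stronglyMeasurable_const
      rw [integral_inner_condexp hm (hgInt k) hθsm (h2M k)]
      have hGint : Integrable (P[g k|F k]) P := integrable_condExp
      have hIG : Integrable (fun ω => ⟪θ k ω - θstar, (P[g k|F k]) ω⟫) P := by
        refine Integrable.mono' (hGint.norm.const_mul (2*M))
          ((hθAE k).inner hGint.aestronglyMeasurable) ?_
        filter_upwards [h2M k] with ω hω
        rw [Real.norm_eq_abs]
        calc |⟪θ k ω - θstar, (P[g k|F k]) ω⟫| ≤ ‖θ k ω - θstar‖ * ‖(P[g k|F k]) ω‖ :=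
              abs_real_inner_le_norm _ _
          _ ≤ 2*M * ‖(P[g k|F k]) ω‖ := mul_le_mul_of_nonneg_right hω (norm_nonneg _)
      have hptw2 : ∀ᵐ ω ∂P, μ/4 * ‖θ k ω - θstar‖ ^ 2 - 2*μ⁻¹*ε k^2*(1+M^2)
          ≤ ⟪θ k ω - θstar, (P[g k|F k]) ω⟫ := by
        filter_upwards [hbias k, hbound k] with ω h1 h2
        set x := θ k ω with hx
        set G := (P[g k|F k]) ω with hG
        have hsc : μ/2 * ‖x - θstar‖ ^ 2 ≤ ⟪gradient f x, x - θstar⟫ := by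
          have hcv := hconv x θstar
          have hmn := hmin x
          rw [show θstar - x = -(x - θstar) from (neg_sub x θstar).symm, inner_neg_right,
            norm_neg] at hcv
          linarith
        have hsplit : ⟪x - θstar, G⟫ =
            ⟪gradient f x, x - θstar⟫ + ⟪x - θstar, G - gradient f x⟫ := by
          rw [real_inner_comm (x - θstar) (gradient f x), ← inner_add_right,
            show gradient f x + (G - gradient f x) = G from by abel]
        have hcs : -((1+‖x‖) * ε k * ‖x - θstar‖) ≤ ⟪x - θstar, G - gradient f x⟫ := by
          have habs := abs_real_inner_le_norm (x - θstar) (G - gradient f x)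
          have hb : ‖x - θstar‖ * ‖G - gradient f x‖ ≤ ‖x - θstar‖ * ((1+‖x‖) * ε k) :=
            mul_le_mul_of_nonneg_left h1 (norm_nonneg _)
          have h4 := neg_abs_le (⟪x - θstar, G - gradient f x⟫)
          linarith
        have hyoung : (1+‖x‖) * ε k * ‖x - θstar‖ ≤
            μ/4 * ‖x - θstar‖ ^ 2 + μ⁻¹ * ((1+‖x‖) * ε k) ^ 2 := by
          rw [← mul_le_mul_iff_of_pos_left hμ]
          have he : μ*(μ/4*‖x - θstar‖^2 + μ⁻¹*((1+‖x‖) * ε k)^2)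
              = μ^2/4*‖x - θstar‖^2 + ((1+‖x‖) * ε k)^2 := by field_simp
          rw [he]
          nlinarith [sq_nonneg (μ/2*‖x - θstar‖ - (1+‖x‖) * ε k)]
        have hZ : μ⁻¹ * ((1+‖x‖) * ε k) ^ 2 ≤ 2*μ⁻¹*ε k^2*(1+M^2) := by
          have hμi : (0:ℝ) ≤ μ⁻¹ := inv_nonneg.mpr hμ.le
          have h3a : (1+‖x‖) ^ 2 ≤ 2*(1+M^2) := by
            nlinarith [sq_nonneg (1-‖x‖), pow_le_pow_left₀ (norm_nonneg x) h2 2]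
          have h3 : ((1+‖x‖) * ε k) ^ 2 ≤ 2*(1+M^2)*ε k^2 := by
            have h3b := mul_le_mul_of_nonneg_right h3a (sq_nonneg (ε k))
            calc ((1+‖x‖) * ε k) ^ 2 = (1+‖x‖)^2 * ε k^2 := by ring
              _ ≤ 2*(1+M^2)*ε k^2 := by linarith
          calc μ⁻¹ * ((1+‖x‖) * ε k) ^ 2 ≤ μ⁻¹ * (2*(1+M^2)*ε k^2) :=
                mul_le_mul_of_nonneg_left h3 hμi
            _ = 2*μ⁻¹*ε k^2*(1+M^2) := by ring
        linarith [hsplit, hsc, hcs, hyoung, hZ]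
      have hIsub2 : Integrable (fun ω => μ/4 * ‖θ k ω - θstar‖ ^ 2
          - 2*μ⁻¹*ε k^2*(1+M^2)) P := ((hI1 k).const_mul (μ/4)).sub (integrable_const _)
      have hle := integral_mono_ae hIsub2 hIG hptw2
      have hI1' : Integrable (fun ω => μ/4 * ‖θ k ω - θstar‖ ^ 2) P := (hI1 k).const_mul _
      rw [integral_sub hI1' (integrable_const _), integral_const_mul, integral_const] at hle
      simpa using hle
    have e1 : 2 * α k * (μ/4 * (∫ ω, ‖θ k ω - θstar‖ ^ 2 ∂P) - 2*μ⁻¹*ε k^2*(1+M^2))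
        ≤ 2 * α k * (∫ ω, ⟪θ k ω - θstar, g k ω⟫ ∂P) :=
      mul_le_mul_of_nonneg_left hinner (by linarith [hα k])
    have e2 : α k ^ 2 * (∫ ω, ‖g k ω‖ ^ 2 ∂P) ≤ α k ^ 2 * (c₀*(1+M^2)) :=
      mul_le_mul_of_nonneg_left hg2 (sq_nonneg _)
    have e3 : (1 - μ * α k / 2) * (∫ ω, ‖θ k ω - θstar‖ ^ 2 ∂P)
        ≤ Real.exp (-(μ/2) * α k) * (∫ ω, ‖θ k ω - θstar‖ ^ 2 ∂P) := by
      refine mul_le_mul_of_nonneg_right ?_ (hDnonneg k)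
      have := Real.add_one_le_exp (-(μ/2) * α k)
      linarith
    linarith [hmain, e1, e2, e3]
  -- induction
  intro k
  induction k with
  | zero =>
    simp only [Finset.range_zero, Finset.sum_empty, mul_zero, neg_zero, Real.exp_zero,
      mul_one, add_zero]
    have hb : ∀ᵐ ω ∂P, ‖θ 0 ω - θstar‖ ^ 2 ≤ 4 * M ^ 2 := by
      filter_upwards [h2M 0] with ω hω
      nlinarith [norm_nonneg (θ 0 ω - θstar)]
    calc (∫ ω, ‖θ 0 ω - θstar‖ ^ 2 ∂P) ≤ ∫ _ω, 4 * M ^ 2 ∂P :=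
          integral_mono_ae (hI1 0) (integrable_const _) hb
      _ = 4 * M ^ 2 := by simp
  | succ k ih =>
    have hexp : (0:ℝ) ≤ Real.exp (-(μ/2) * α k) := (Real.exp_pos _).le
    have h2' := mul_le_mul_of_nonneg_left ih hexp
    have s1 : (∑ i ∈ Finset.range (k+1), α i * (c₀ * α i + 4 * μ⁻¹ * ε i ^ 2) *
          Real.exp (-(μ / 2) * ∑ j ∈ Finset.Ico (i + 1) (k+1), α j))
        = (∑ i ∈ Finset.range k, α i * (c₀ * α i + 4 * μ⁻¹ * ε i ^ 2) *
          Real.exp (-(μ / 2) * ∑ j ∈ Finset.Ico (i + 1) k, α j)) * Real.exp (-(μ/2) * α k)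
          + α k * (c₀ * α k + 4 * μ⁻¹ * ε k ^ 2) := by
      rw [Finset.sum_range_succ, Finset.Ico_self, Finset.sum_empty, mul_zero,
        Real.exp_zero, mul_one]
      have hterm : ∀ i ∈ Finset.range k,
          α i * (c₀ * α i + 4 * μ⁻¹ * ε i ^ 2) *
            Real.exp (-(μ / 2) * ∑ j ∈ Finset.Ico (i + 1) (k+1), α j)
          = (α i * (c₀ * α i + 4 * μ⁻¹ * ε i ^ 2) *
            Real.exp (-(μ / 2) * ∑ j ∈ Finset.Ico (i + 1) k, α j)) *
              Real.exp (-(μ/2) * α k) := by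
        intro i hi
        rw [Finset.sum_Ico_succ_top (Nat.succ_le_of_lt (Finset.mem_range.mp hi)),
          show -(μ/2) * ((∑ j ∈ Finset.Ico (i + 1) k, α j) + α k)
            = -(μ/2) * (∑ j ∈ Finset.Ico (i + 1) k, α j) + -(μ/2) * α k from by ring,
          Real.exp_add]
        ring
      rw [Finset.sum_congr rfl hterm, ← Finset.sum_mul]
    have s2 : (∑ i ∈ Finset.range (k+1), α i) = (∑ i ∈ Finset.range k, α i) + α k :=
      Finset.sum_range_succ _ _
    have heq : (4 * M ^ 2 * Real.exp (-(μ / 2) * ∑ i ∈ Finset.range (k+1), α i) +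
        (1 + M ^ 2) * ∑ i ∈ Finset.range (k+1), α i * (c₀ * α i + 4 * μ⁻¹ * ε i ^ 2) *
          Real.exp (-(μ / 2) * ∑ j ∈ Finset.Ico (i + 1) (k+1), α j)) =
        Real.exp (-(μ/2) * α k) *
          (4 * M ^ 2 * Real.exp (-(μ / 2) * ∑ i ∈ Finset.range k, α i) +
          (1 + M ^ 2) * ∑ i ∈ Finset.range k, α i * (c₀ * α i + 4 * μ⁻¹ * ε i ^ 2) *
            Real.exp (-(μ / 2) * ∑ j ∈ Finset.Ico (i + 1) k, α j))
          + α k * (1 + M ^ 2) * (c₀ * α k + 4 * μ⁻¹ * ε k ^ 2) := by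
      rw [s1, s2, show -(μ/2) * ((∑ i ∈ Finset.range k, α i) + α k)
          = -(μ/2) * (∑ i ∈ Finset.range k, α i) + -(μ/2) * α k from by ring, Real.exp_add]
      ring
    rw [heq]
    calc (∫ ω, ‖θ (k+1) ω - θstar‖ ^ 2 ∂P) ≤
          Real.exp (-(μ/2) * α k) * (∫ ω, ‖θ k ω - θstar‖ ^ 2 ∂P)
            + α k * (1 + M^2) * (c₀ * α k + 4 * μ⁻¹ * ε k ^ 2) := hstep k
      _ ≤ _ := by linarith [h2']
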